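/- Let λ be a real number with λ > 1. Then there exists a real t > 0 with λ·tanh t = t, and the purely imaginary points i·t and −i·t are two distinct attracting fixed points of f_λ: f_λ(i·t) = i·t, f_λ(−i·t) = −i·t, and |deriv f_λ(i·t)| < 1 (equally |deriv f_λ(−i·t)| < 1). -/

import Mathlib

open Complex Filter

/-- The tangent family: `f_λ(z) = λ · tan z`, with Mathlib's total complex tangent. -/
noncomputable def ftan (lam : ℂ) : ℂ → ℂ := fun z => lam * Complex.tan z

lemma ftan_exists_t (lam : ℝ) (h : 1 < lam) :
    ∃ t : ℝ, 0 < t ∧ lam * Real.tanh t = t := by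
  have hlam0 : (0 : ℝ) < lam := lt_trans one_pos h
  set a : ℝ := Real.log lam with ha
  have ha0 : 0 < a := Real.log_pos h
  set g : ℝ → ℝ := fun x => lam * Real.tanh x - x with hg
  have hcont : Continuous g := by
    simp only [hg, Real.tanh_eq_sinh_div_cosh]
    exact (continuous_const.mul (Real.continuous_sinh.div Real.continuous_cosh
      fun x => (Real.cosh_pos x).ne')).sub continuous_id
  have hga : 0 < g a := by
    have hcosh : Real.cosh a < lam := by
      have h1 : Real.exp (-a) < Real.exp a := Real.exp_lt_exp.2 (by linarith)
      have h2 : Real.cosh a < Real.exp a := by rw [Real.cosh_eq]; linarith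
      rwa [Real.exp_log hlam0] at h2
    have hsinh : a < Real.sinh a := Real.self_lt_sinh_iff.2 ha0
    have hcoshpos : 0 < Real.cosh a := Real.cosh_pos a
    have key : a < lam * Real.tanh a := by
      rw [Real.tanh_eq_sinh_div_cosh, mul_div_assoc', lt_div_iff₀ hcoshpos]
      nlinarith
    simp only [hg]; linarith
  have hgb : g lam < 0 := by
    have htanh1 : Real.tanh lam < 1 := by
      rw [Real.tanh_eq_sinh_div_cosh, div_lt_one (Real.cosh_pos lam)]
      exact Real.sinh_lt_cosh lam
    have : lam * Real.tanh lam < lam * 1 := mul_lt_mul_of_pos_left htanh1 hlam0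
    simp only [hg]; linarith
  have hab : a ≤ lam := ((Real.log_le_sub_one_of_pos hlam0).trans (by linarith))
  have : (0 : ℝ) ∈ Set.Icc (g lam) (g a) := ⟨hgb.le, hga.le⟩
  obtain ⟨t, ht, hgt⟩ := intermediate_value_Icc' hab hcont.continuousOn this
  exact ⟨t, lt_of_lt_of_le ha0 ht.1, by simp only [hg] at hgt; linarith⟩

lemma lam_lt_cosh_sq (lam t : ℝ) (h : 1 < lam) (ht : 0 < t)
    (hfix : lam * Real.tanh t = t) : lam < Real.cosh t ^ 2 := by
  have hcosh : 0 < Real.cosh t := Real.cosh_pos t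
  have hsinh : 0 < Real.sinh t := Real.sinh_pos_iff.2 ht
  have hsinh' : t < Real.sinh t := Real.self_lt_sinh_iff.2 ht
  have hone : 1 ≤ Real.cosh t := Real.one_le_cosh t
  rw [Real.tanh_eq_sinh_div_cosh] at hfix
  have hls : lam * Real.sinh t = t * Real.cosh t := by
    field_simp at hfix; linarith
  nlinarith [mul_lt_mul_of_pos_right hsinh' hcosh,
    mul_le_mul_of_nonneg_left hone (mul_pos hsinh hcosh).le, mul_pos hsinh hcosh]

/-- For real `λ > 1`, there is `t > 0` with `λ·tanh t = t`, and `±it` are two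
distinct attracting fixed points of `f_λ`. -/
theorem two_attracting_fixed_points_real_lam (lam : ℝ) (h : 1 < lam) :
    ∃ t : ℝ, 0 < t ∧ lam * Real.tanh t = t ∧
      ftan (lam : ℂ) (Complex.I * t) = Complex.I * t ∧
      ftan (lam : ℂ) (-(Complex.I * t)) = -(Complex.I * t) ∧
      (Complex.I * (t : ℂ)) ≠ -(Complex.I * t) ∧
      ‖deriv (ftan (lam : ℂ)) (Complex.I * t)‖ < 1 ∧
      ‖deriv (ftan (lam : ℂ)) (-(Complex.I * t))‖ < 1 := by
  obtain ⟨t, ht, hfix⟩ := ftan_exists_t lam h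
  have hlam0 : (0 : ℝ) < lam := lt_trans one_pos h
  have htan : Complex.tan (Complex.I * t) = Complex.I * (Real.tanh t : ℂ) := by
    rw [mul_comm, Complex.tan_mul_I, Complex.ofReal_tanh, mul_comm]
  have hfixC : ftan (lam : ℂ) (Complex.I * t) = Complex.I * t := by
    rw [ftan, htan]
    rw [show ((lam : ℂ) * (Complex.I * (Real.tanh t : ℂ))) =
      Complex.I * ((lam : ℂ) * (Real.tanh t : ℂ)) by ring]
    rw [← Complex.ofReal_mul, hfix]
  have hfixC' : ftan (lam : ℂ) (-(Complex.I * t)) = -(Complex.I * t) := by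
    rw [ftan, Complex.tan_neg, htan]
    rw [show ((lam : ℂ) * -(Complex.I * (Real.tanh t : ℂ))) =
      -(Complex.I * ((lam : ℂ) * (Real.tanh t : ℂ))) by ring]
    rw [← Complex.ofReal_mul, hfix]
  have hne : (Complex.I * (t : ℂ)) ≠ -(Complex.I * t) := by
    intro hc
    have : (2 : ℂ) * (Complex.I * t) = 0 := by linear_combination hc
    simp [Complex.I_ne_zero, Complex.ext_iff] at this
    exact ht.ne' (by exact_mod_cast this)
  have hcosh : Complex.cos (Complex.I * t) = (Real.cosh t : ℂ) := by
    rw [mul_comm, Complex.cos_mul_I, Complex.ofReal_cosh]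
  have hcosh0 : Complex.cos (Complex.I * t) ≠ 0 := by
    rw [hcosh]
    exact_mod_cast (Real.cosh_pos t).ne'
  have hcosh0' : Complex.cos (-(Complex.I * t)) ≠ 0 := by
    rwa [Complex.cos_neg]
  have hlt : lam < Real.cosh t ^ 2 := lam_lt_cosh_sq lam t h ht hfix
  have habs : ∀ z : ℂ, Complex.cos z = (Real.cosh t : ℂ) →
      ‖deriv (ftan (lam : ℂ)) z‖ < 1 := by
    intro z hz
    have hz0 : Complex.cos z ≠ 0 := by
      rw [hz]; exact_mod_cast (Real.cosh_pos t).ne'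
    have hd : HasDerivAt (ftan (lam : ℂ)) ((lam : ℂ) * (1 / Complex.cos z ^ 2)) z :=
      (Complex.hasDerivAt_tan hz0).const_mul _
    rw [hd.deriv, hz]
    rw [show ((lam : ℂ) * (1 / (Real.cosh t : ℂ) ^ 2)) =
      ((lam / Real.cosh t ^ 2 : ℝ) : ℂ) by push_cast; ring]
    rw [Complex.norm_real, Real.norm_eq_abs, abs_of_pos (div_pos hlam0 (pow_pos (Real.cosh_pos t) 2))]
    rw [div_lt_one (pow_pos (Real.cosh_pos t) 2)]
    exact hlt
  refine ⟨t, ht, hfix, hfixC, hfixC', hne, habs _ hcosh, habs _ ?_⟩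
  rwa [Complex.cos_neg]
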